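/- Let 0 ≤ c(λ) ≤ λ be such that there exists at least one k ∈ ℤ^d with c(λ) ≤ ‖k‖ ≤ λ. Then for every a ∈ L²(𝕋^d) and every eigenbasis (ψ_j)_{j≥1} of L²(𝕋^d), one has (1/#{j : c(λ) ≤ λ_j ≤ λ}) · ∑_{j : c(λ) ≤ λ_j ≤ λ} |∫_{𝕋^d} a|ψ_j|² dx − ∫_{𝕋^d} a dx|² ≤ ∑_{n ∈ ℤ^d, 1 ≤ ‖n‖ ≤ 2λ} |â_n|² · #{k ∈ ℤ^d : ‖k‖ = ‖k+n‖ and c(λ) ≤ ‖k‖ ≤ λ} / #{k ∈ ℤ^d : c(λ) ≤ ‖k‖ ≤ λ}. -/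

import Mathlib

open MeasureTheory Real BigOperators ComplexConjugate

noncomputable section

instance : Fact (0 < 2 * π) := ⟨by positivity⟩

/-- The flat torus `𝕋^d = ℝ^d/(2πℤ)^d`. -/
abbrev Td (d : ℕ) := Fin d → AddCircle (2 * π)

/-- The normalized Haar probability measure on the flat torus. -/
def haarT (d : ℕ) : Measure (Td d) :=
  Measure.pi fun _ : Fin d => AddCircle.haarAddCircle

/-- The character `e_k(x) = e^{i⟨k,x⟩}` for `k ∈ ℤ^d`. -/
def eChar {d : ℕ} (k : Fin d → ℤ) (x : Td d) : ℂ := ∏ i, fourier (k i) (x i)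

/-- Euclidean norm of a lattice point of `ℤ^d`. -/
def znorm {d : ℕ} (k : Fin d → ℤ) : ℝ := Real.sqrt (∑ i, ((k i : ℝ)) ^ 2)

/-- The primitive lattice point `n̂` generating `n ≠ 0`: divide out the gcd of coordinates. -/
def primPart {d : ℕ} (n : Fin d → ℤ) : Fin d → ℤ := fun i => n i / Finset.univ.gcd n

/-- Fourier coefficient `â_n = ∫ a(x) e^{-i⟨n,x⟩} dx` of `a ∈ L²(𝕋^d)`. -/
def fcoef {d : ℕ} (a : Td d → ℂ) (n : Fin d → ℤ) : ℂ :=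
  ∫ x, a x * conj (eChar n x) ∂(haarT d)

/-- Fourier transform `μ̂(n) = ∫ e^{-i⟨n,x⟩} dμ(x)` of a measure on `𝕋^d`. -/
def muF {d : ℕ} (μ : Measure (Td d)) (n : Fin d → ℤ) : ℂ :=
  ∫ x, conj (eChar n x) ∂μ

/-- `N(λ) = #{k ∈ ℤ^d : ‖k‖ ≤ λ}`, the spectral counting function. -/
def latticeCount (d : ℕ) (lam : ℝ) : ℕ := Set.ncard {k : Fin d → ℤ | znorm k ≤ lam}

/-- An eigenbasis of `L²(𝕋^d)`: an orthonormal basis `(ψ_j)` of Laplace eigenfunctions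
`ψ_j = ∑_{‖k‖ = Λ j} c_j(k) e_k`, with nondecreasing eigenvalues `(Λ j)²` (nonnegative
integers), orthonormality and completeness expressed via the Fourier coefficients. -/
structure Eigenbasis (d : ℕ) where
  ψ : ℕ → Td d → ℂ
  Λ : ℕ → ℝ
  c : ℕ → (Fin d → ℤ) → ℂ
  nonneg : ∀ j, 0 ≤ Λ j
  mono : Monotone Λ
  eig_int : ∀ j, ∃ E : ℕ, Λ j ^ 2 = E
  repr : ∀ j x, ψ j x = ∑' k : Fin d → ℤ, c j k * eChar k x
  supp : ∀ j k, c j k ≠ 0 → znorm k = Λ j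
  ortho : ∀ i j, ∑' k : Fin d → ℤ, c i k * conj (c j k) = if i = j then 1 else 0
  complete : ∀ k l : Fin d → ℤ, ∑' j : ℕ, c j k * conj (c j l) = if k = l then 1 else 0

/-- A function on the torus is smooth if its `(2πℤ)^d`-periodic lift to `ℝ^d` is `C^∞`. -/
def SmoothOnTorus {d : ℕ} (a : Td d → ℂ) : Prop :=
  ContDiff ℝ (⊤ : ℕ∞) fun x : Fin d → ℝ => a fun i => (x i : AddCircle (2 * π))

section helpers
variable {d : ℕ}

instance : IsProbabilityMeasure (haarT d) := by
  unfold haarT; infer_instance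

lemma mul_conj_self (z : ℂ) : z * conj z = ((‖z‖ ^ 2 : ℝ) : ℂ) := by
  rw [Complex.mul_conj, Complex.normSq_eq_norm_sq]

lemma znorm_nonneg (k : Fin d → ℤ) : 0 ≤ znorm k := Real.sqrt_nonneg _

lemma znorm_eq_norm (k : Fin d → ℤ) :
    znorm k = ‖(WithLp.equiv 2 (Fin d → ℝ)).symm (fun i => (k i : ℝ))‖ := by
  rw [EuclideanSpace.norm_eq, znorm]
  congr 1
  refine Finset.sum_congr rfl fun i _ => ?_
  rw [Real.norm_eq_abs, sq_abs]
  rfl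

lemma abs_le_znorm (k : Fin d → ℤ) (i : Fin d) : |(k i : ℝ)| ≤ znorm k := by
  rw [← Real.sqrt_sq_eq_abs, znorm]
  apply Real.sqrt_le_sqrt
  exact Finset.single_le_sum (fun j _ => sq_nonneg ((k j : ℝ))) (Finset.mem_univ i)

lemma znorm_add_le (k l : Fin d → ℤ) : znorm (k + l) ≤ znorm k + znorm l := by
  simp only [znorm_eq_norm]
  have : (WithLp.equiv 2 (Fin d → ℝ)).symm (fun i => ((k + l) i : ℝ))
      = (WithLp.equiv 2 (Fin d → ℝ)).symm (fun i => (k i : ℝ))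
        + (WithLp.equiv 2 (Fin d → ℝ)).symm (fun i => (l i : ℝ)) := by
    rw [show (fun i => ((k + l) i : ℝ)) = ((fun i => (k i : ℝ)) + fun i => (l i : ℝ) : Fin d → ℝ)
      from by funext i; simp [Pi.add_apply]]
    rfl
  rw [this]
  exact norm_add_le _ _

lemma znorm_neg (k : Fin d → ℤ) : znorm (-k) = znorm k := by
  unfold znorm; congr 1; refine Finset.sum_congr rfl fun i _ => ?_
  simp [Pi.neg_apply]

lemma znorm_zero : znorm (0 : Fin d → ℤ) = 0 := by
  simp [znorm]

lemma one_le_znorm {k : Fin d → ℤ} (hk : k ≠ 0) : 1 ≤ znorm k := by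
  obtain ⟨i, hi⟩ : ∃ i, k i ≠ 0 := by
    by_contra h
    push_neg at h
    exact hk (funext h)
  have h1 : (1 : ℝ) ≤ |(k i : ℝ)| := by
    have := Int.one_le_abs hi
    rw [← Int.cast_abs]
    exact_mod_cast this
  exact h1.trans (abs_le_znorm k i)

lemma finite_ball (R : ℝ) : {k : Fin d → ℤ | znorm k ≤ R}.Finite := by
  have : {k : Fin d → ℤ | znorm k ≤ R} ⊆
      Set.pi Set.univ (fun _ : Fin d => Set.Icc (-⌈R⌉) ⌈R⌉) := by
    intro k hk
    intro i _
    have h1 : |(k i : ℝ)| ≤ R := (abs_le_znorm k i).trans hk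
    have h3 : |k i| ≤ ⌈R⌉ := by exact_mod_cast h1.trans (Int.le_ceil R)
    exact abs_le.mp h3
  exact Set.Finite.subset (Set.Finite.pi fun i => Set.finite_Icc _ _) this

lemma eChar_continuous (m : Fin d → ℤ) : Continuous (eChar m) :=
  continuous_finset_prod _ fun i _ => (fourier (m i)).continuous.comp (continuous_apply i)

lemma norm_eChar (m : Fin d → ℤ) (x : Td d) : ‖eChar m x‖ = 1 := by
  rw [eChar, norm_prod]
  exact Finset.prod_eq_one fun i _ => Circle.norm_coe _

lemma eChar_zero (x : Td d) : eChar 0 x = 1 := by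
  simp [eChar, fourier_zero]

lemma eChar_conj (m : Fin d → ℤ) (x : Td d) : conj (eChar m x) = eChar (-m) x := by
  rw [eChar, eChar, map_prod]
  exact Finset.prod_congr rfl fun i _ => (fourier_neg).symm

lemma eChar_mul (k l : Fin d → ℤ) (x : Td d) :
    eChar k x * eChar l x = eChar (k + l) x := by
  rw [eChar, eChar, eChar, ← Finset.prod_mul_distrib]
  exact Finset.prod_congr rfl fun i _ => (fourier_add).symm

lemma eChar_mul_conj (k l : Fin d → ℤ) (x : Td d) :
    eChar k x * conj (eChar l x) = conj (eChar (l - k) x) := by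
  rw [eChar_conj, eChar_conj, eChar_mul, neg_sub, sub_eq_add_neg, add_comm]

lemma integrable_mul_eChar {a : Td d → ℂ} (ha : Integrable a (haarT d)) (m : Fin d → ℤ) :
    Integrable (fun x => a x * conj (eChar m x)) (haarT d) := by
  have : (fun x => a x * conj (eChar m x)) = fun x => (conj (eChar m x)) * a x := by
    funext x; ring
  rw [this]
  refine Integrable.bdd_mul (c := 1) ha ?_ (Filter.Eventually.of_forall fun x => ?_)
  · exact (Complex.continuous_conj.comp (eChar_continuous m)).aestronglyMeasurable
  · rw [RCLike.norm_conj, norm_eChar]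

end helpers

lemma expand_integral {d : ℕ} {a : Td d → ℂ} (ha : Integrable a (haarT d))
    (cc : (Fin d → ℤ) → ℂ) (S : Finset (Fin d → ℤ)) (ψx : Td d → ℂ)
    (hψ : ∀ x, ψx x = ∑ k ∈ S, cc k * eChar k x) :
    ∫ x, a x * ((‖ψx x‖ ^ 2 : ℝ) : ℂ) ∂(haarT d)
      = ∑ p ∈ S ×ˢ S, (cc p.1 * conj (cc p.2)) * fcoef a (p.2 - p.1) := by
  have hpt : ∀ x, a x * ((‖ψx x‖ ^ 2 : ℝ) : ℂ)
      = ∑ p ∈ S ×ˢ S, (cc p.1 * conj (cc p.2)) * (a x * conj (eChar (p.2 - p.1) x)) := by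
    intro x
    rw [Finset.sum_product, ← mul_conj_self (ψx x), hψ x, map_sum, Finset.sum_mul_sum,
      Finset.mul_sum]
    refine Finset.sum_congr rfl fun k _ => ?_
    rw [Finset.mul_sum]
    refine Finset.sum_congr rfl fun l _ => ?_
    rw [map_mul, ← eChar_mul_conj k l x]
    ring
  calc ∫ x, a x * ((‖ψx x‖ ^ 2 : ℝ) : ℂ) ∂(haarT d)
      = ∫ x, ∑ p ∈ S ×ˢ S, (cc p.1 * conj (cc p.2)) * (a x * conj (eChar (p.2 - p.1) x))
          ∂(haarT d) := integral_congr_ae (Filter.Eventually.of_forall hpt)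
    _ = ∑ p ∈ S ×ˢ S, ∫ x, (cc p.1 * conj (cc p.2)) * (a x * conj (eChar (p.2 - p.1) x))
          ∂(haarT d) :=
        integral_finset_sum _ (fun p _ => ((integrable_mul_eChar ha _).const_mul _))
    _ = ∑ p ∈ S ×ˢ S, (cc p.1 * conj (cc p.2)) * fcoef a (p.2 - p.1) := by
        refine Finset.sum_congr rfl fun p _ => ?_
        rw [integral_const_mul]
        rfl

lemma card_le_of_ortho {ι κ : Type*} [DecidableEq ι] (t : Finset ι) (u : Finset κ)
    (v : ι → κ → ℂ)
    (h : ∀ i ∈ t, ∀ j ∈ t, ∑ k ∈ u, v i k * conj (v j k) = if i = j then 1 else 0) :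
    t.card ≤ u.card := by
  classical
  set w : ↥t → EuclideanSpace ℂ ↥u :=
    fun i => (WithLp.equiv 2 (↥u → ℂ)).symm (fun k => conj (v (i : ι) (k : κ))) with hw
  have horth : Orthonormal ℂ w := by
    rw [orthonormal_iff_ite]
    intro i j
    have hinner : (inner ℂ (w i) (w j) : ℂ) = ∑ k ∈ u, v (i : ι) k * conj (v (j : ι) k) := by
      have h1 : (inner ℂ (w i) (w j) : ℂ)
          = ∑ k : ↥u, v (i : ι) (k : κ) * conj (v (j : ι) (k : κ)) := by
        simp only [hw, PiLp.inner_apply, RCLike.inner_apply, WithLp.equiv_symm_apply, PiLp.toLp_apply,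
          Complex.conj_conj]
        try exact Finset.sum_congr rfl fun k _ => by ring
      rw [h1]
      exact Finset.sum_coe_sort u (fun k => v (i : ι) k * conj (v (j : ι) k))
    rw [hinner, h i i.2 j j.2]
    exact if_congr Subtype.ext_iff.symm rfl rfl
  have hcard := horth.linearIndependent.fintype_card_le_finrank
  rwa [finrank_euclideanSpace, Fintype.card_coe, Fintype.card_coe] at hcard


/-- quantum variance bounded by lattice point counts (Proposition on moments). -/
theorem statement4 (d : ℕ) (hd : 2 ≤ d) (clam lam : ℝ) (hc0 : 0 ≤ clam) (hclam : clam ≤ lam)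
    (hne : ∃ k : Fin d → ℤ, clam ≤ znorm k ∧ znorm k ≤ lam)
    (a : Td d → ℂ) (ha : MemLp a 2 (haarT d)) (B : Eigenbasis d) :
    (1 / (Set.ncard {j : ℕ | clam ≤ B.Λ j ∧ B.Λ j ≤ lam} : ℝ)) *
        (∑' j : ℕ, if clam ≤ B.Λ j ∧ B.Λ j ≤ lam then
          ‖(∫ x, a x * ((‖B.ψ j x‖ ^ 2 : ℝ) : ℂ) ∂(haarT d)) - ∫ x, a x ∂(haarT d)‖ ^ 2
          else 0)
      ≤ ∑' n : Fin d → ℤ,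
          if 1 ≤ znorm n ∧ znorm n ≤ 2 * lam then
            ‖fcoef a n‖ ^ 2 *
              ((Set.ncard {k : Fin d → ℤ |
                  znorm k = znorm (k + n) ∧ clam ≤ znorm k ∧ znorm k ≤ lam} : ℝ) /
                (Set.ncard {k : Fin d → ℤ | clam ≤ znorm k ∧ znorm k ≤ lam} : ℝ))
          else 0 := by
  classical
  have hlam0 : (0:ℝ) ≤ lam := hc0.trans hclam
  have haint : Integrable a (haarT d) := ha.integrable one_le_two
  set W : Set (Fin d → ℤ) := {k | clam ≤ znorm k ∧ znorm k ≤ lam} with hWdef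
  have hWfinite : W.Finite := (finite_ball lam).subset (fun k hk => hk.2)
  set Wfin : Finset (Fin d → ℤ) := hWfinite.toFinset with hWfin
  set J : Set ℕ := {j | clam ≤ B.Λ j ∧ B.Λ j ≤ lam} with hJdef
  have hmemW : ∀ k, k ∈ Wfin ↔ (clam ≤ znorm k ∧ znorm k ≤ lam) := fun k =>
    hWfinite.mem_toFinset
  have hsupp0 : ∀ j, j ∈ J → ∀ k, k ∉ Wfin → B.c j k = 0 := by
    intro j hj k hk
    by_contra h
    exact hk ((hmemW k).2 (by rw [B.supp j k h]; exact hj))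
  have hsupp1 : ∀ j k, k ∈ Wfin → B.c j k ≠ 0 → j ∈ J := by
    intro j k hk h
    have h1 := B.supp j k h
    have h2 := (hmemW k).1 hk
    exact ⟨h1 ▸ h2.1, h1 ▸ h2.2⟩
  have hrow : ∀ i ∈ J, ∀ j ∈ J,
      ∑ k ∈ Wfin, B.c i k * conj (B.c j k) = if i = j then 1 else 0 := by
    intro i hi j hj
    rw [← B.ortho i j]
    exact (tsum_eq_sum (fun k hk => by rw [hsupp0 i hi k hk, zero_mul])).symm
  have hJfinite : J.Finite := by
    by_contra h
    obtain ⟨t, hts, htcard⟩ := Set.Infinite.exists_subset_card_eq h (Wfin.card + 1)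
    have hle : t.card ≤ Wfin.card :=
      card_le_of_ortho t Wfin (fun j k => B.c j k)
        (fun i hi j hj => hrow i (hts hi) j (hts hj))
    omega
  set Jfin : Finset ℕ := hJfinite.toFinset with hJfin
  have hmemJ : ∀ j, j ∈ Jfin ↔ (clam ≤ B.Λ j ∧ B.Λ j ≤ lam) := fun j =>
    hJfinite.mem_toFinset
  have hcol : ∀ k ∈ Wfin, ∀ l ∈ Wfin,
      ∑ j ∈ Jfin, B.c j k * conj (B.c j l) = if k = l then 1 else 0 := by
    intro k hk l hl
    rw [← B.complete k l]
    refine (tsum_eq_sum (fun j hj => ?_)).symm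
    by_cases h1 : B.c j k = 0
    · rw [h1, zero_mul]
    · exact absurd (hJfinite.mem_toFinset.2 (hsupp1 j k hk h1)) hj
  have hWne : Wfin.Nonempty := ⟨hne.choose, (hmemW _).2 hne.choose_spec⟩
  have hWcard_pos : 0 < Wfin.card := Finset.card_pos.2 hWne
  have hcardle : Wfin.card ≤ Jfin.card :=
     card_le_of_ortho Wfin Jfin (fun k j => B.c j k)
      (fun k hk l hl => hcol k hk l hl)
  have hJcard_pos : 0 < Jfin.card := lt_of_lt_of_le hWcard_pos hcardle
  have hccnormC : ∀ j ∈ Jfin, ∑ k ∈ Wfin, B.c j k * conj (B.c j k) = 1 := by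
    intro j hj
    have := hrow j (hJfinite.mem_toFinset.1 hj) j (hJfinite.mem_toFinset.1 hj)
    simpa using this
  have hccnorm : ∀ j ∈ Jfin, ∑ k ∈ Wfin, ‖B.c j k‖ ^ 2 = 1 := by
    intro j hj
    have h2 : ((∑ k ∈ Wfin, ‖B.c j k‖ ^ 2 : ℝ) : ℂ) = 1 := by
      rw [Complex.ofReal_sum, ← hccnormC j hj]
      exact Finset.sum_congr rfl fun k _ => (mul_conj_self _).symm
    exact_mod_cast h2
  set T : (Fin d → ℤ) → (Fin d → ℤ) → ℂ :=
    fun k l => if znorm k = znorm l ∧ k ≠ l then fcoef a (l - k) else 0 with hT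
  -- Step 1: variance identity
  have hV : ∀ j ∈ Jfin,
      (∫ x, a x * ((‖B.ψ j x‖ ^ 2 : ℝ) : ℂ) ∂(haarT d)) - ∫ x, a x ∂(haarT d)
        = ∑ p ∈ Wfin ×ˢ Wfin, T p.1 p.2 * (B.c j p.1 * conj (B.c j p.2)) := by
    intro j hj
    have hjJ : j ∈ J := hJfinite.mem_toFinset.1 hj
    have hψ : ∀ x, B.ψ j x = ∑ k ∈ Wfin, B.c j k * eChar k x := by
      intro x
      rw [B.repr j x]
      exact tsum_eq_sum (fun k hk => by rw [hsupp0 j hjJ k hk, zero_mul])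
    have hInt := expand_integral haint (B.c j) Wfin (B.ψ j) hψ
    have hazero : (∫ x, a x ∂(haarT d)) = fcoef a 0 := by
      unfold fcoef
      refine integral_congr_ae (Filter.Eventually.of_forall fun x => ?_)
      simp [eChar_zero]
    have hsplit : ∀ p ∈ Wfin ×ˢ Wfin,
        (B.c j p.1 * conj (B.c j p.2)) * fcoef a (p.2 - p.1)
          = T p.1 p.2 * (B.c j p.1 * conj (B.c j p.2))
            + (if p.1 = p.2 then fcoef a 0 * (B.c j p.1 * conj (B.c j p.2)) else 0) := by
      intro p _
      by_cases h1 : p.1 = p.2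
      · rw [if_pos h1, hT]
        simp only
        rw [if_neg (fun hcon => hcon.2 h1), h1, sub_self]
        ring
      · rw [if_neg h1, hT]
        simp only
        by_cases h2 : znorm p.1 = znorm p.2
        · rw [if_pos ⟨h2, h1⟩]; ring
        · rw [if_neg (fun hcon => h2 hcon.1)]
          by_cases h3 : B.c j p.1 = 0
          · rw [h3]; ring
          · have h4 : B.c j p.2 = 0 := by
              by_contra h5
              exact h2 (by rw [B.supp j p.1 h3, B.supp j p.2 h5])
            rw [h4]
            simp
    have hdiag : ∑ p ∈ Wfin ×ˢ Wfin,
        (if p.1 = p.2 then fcoef a 0 * (B.c j p.1 * conj (B.c j p.2)) else 0) = fcoef a 0 := by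
      rw [Finset.sum_product]
      have heach : ∀ k ∈ Wfin, ∑ l ∈ Wfin,
          (if k = l then fcoef a 0 * (B.c j k * conj (B.c j l)) else 0)
            = fcoef a 0 * (B.c j k * conj (B.c j k)) := by
        intro k hk
        rw [Finset.sum_ite_eq, if_pos hk]
      rw [Finset.sum_congr rfl heach, ← Finset.mul_sum, hccnormC j hj, mul_one]
    rw [hInt, hazero, Finset.sum_congr rfl hsplit, Finset.sum_add_distrib, hdiag]
    ring
  -- Step 2: Cauchy-Schwarz per j
  have hCS : ∀ j ∈ Jfin,
      ‖∑ p ∈ Wfin ×ˢ Wfin, T p.1 p.2 * (B.c j p.1 * conj (B.c j p.2))‖ ^ 2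
        ≤ ∑ l ∈ Wfin, ‖∑ k ∈ Wfin, T k l * B.c j k‖ ^ 2 := by
    intro j hj
    have hre : ∑ p ∈ Wfin ×ˢ Wfin, T p.1 p.2 * (B.c j p.1 * conj (B.c j p.2))
        = ∑ l ∈ Wfin, conj (B.c j l) * ∑ k ∈ Wfin, T k l * B.c j k := by
      rw [Finset.sum_product, Finset.sum_comm]
      refine Finset.sum_congr rfl fun l _ => ?_
      rw [Finset.mul_sum]
      exact Finset.sum_congr rfl fun k _ => by ring
    rw [hre]
    have h1 : ‖∑ l ∈ Wfin, conj (B.c j l) * ∑ k ∈ Wfin, T k l * B.c j k‖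
        ≤ ∑ l ∈ Wfin, ‖B.c j l‖ * ‖∑ k ∈ Wfin, T k l * B.c j k‖ := by
      refine (norm_sum_le _ _).trans (Finset.sum_le_sum fun l _ => ?_)
      rw [norm_mul, RCLike.norm_conj]
    calc ‖∑ l ∈ Wfin, conj (B.c j l) * ∑ k ∈ Wfin, T k l * B.c j k‖ ^ 2
        ≤ (∑ l ∈ Wfin, ‖B.c j l‖ * ‖∑ k ∈ Wfin, T k l * B.c j k‖) ^ 2 :=
          pow_le_pow_left₀ (norm_nonneg _) h1 2
      _ ≤ (∑ l ∈ Wfin, ‖B.c j l‖ ^ 2) * ∑ l ∈ Wfin, ‖∑ k ∈ Wfin, T k l * B.c j k‖ ^ 2 :=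
          Finset.sum_mul_sq_le_sq_mul_sq _ _ _
      _ = ∑ l ∈ Wfin, ‖∑ k ∈ Wfin, T k l * B.c j k‖ ^ 2 := by
          rw [hccnorm j hj, one_mul]
  -- Step 3: sum over j via completeness
  have hsumj : ∀ l, ∑ j ∈ Jfin, ‖∑ k ∈ Wfin, T k l * B.c j k‖ ^ 2
      = ∑ k ∈ Wfin, ‖T k l‖ ^ 2 := by
    intro l
    have key : ∑ j ∈ Jfin, ((∑ k ∈ Wfin, T k l * B.c j k) * conj (∑ k ∈ Wfin, T k l * B.c j k))
        = ∑ k ∈ Wfin, T k l * conj (T k l) := by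
      have expand : ∀ j, (∑ k ∈ Wfin, T k l * B.c j k) * conj (∑ k ∈ Wfin, T k l * B.c j k)
          = ∑ k ∈ Wfin, ∑ k' ∈ Wfin,
              (T k l * conj (T k' l)) * (B.c j k * conj (B.c j k')) := by
        intro j
        rw [map_sum, Finset.sum_mul_sum]
        refine Finset.sum_congr rfl fun k _ => Finset.sum_congr rfl fun k' _ => ?_
        rw [map_mul]; ring
      calc ∑ j ∈ Jfin, ((∑ k ∈ Wfin, T k l * B.c j k) * conj (∑ k ∈ Wfin, T k l * B.c j k))
          = ∑ j ∈ Jfin, ∑ k ∈ Wfin, ∑ k' ∈ Wfin,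
              (T k l * conj (T k' l)) * (B.c j k * conj (B.c j k')) :=
            Finset.sum_congr rfl fun j _ => expand j
        _ = ∑ k ∈ Wfin, ∑ k' ∈ Wfin, ∑ j ∈ Jfin,
              (T k l * conj (T k' l)) * (B.c j k * conj (B.c j k')) := by
            rw [Finset.sum_comm]
            exact Finset.sum_congr rfl fun k _ => Finset.sum_comm
        _ = ∑ k ∈ Wfin, ∑ k' ∈ Wfin,
              (T k l * conj (T k' l)) * ∑ j ∈ Jfin, (B.c j k * conj (B.c j k')) :=
            Finset.sum_congr rfl fun k _ => Finset.sum_congr rfl fun k' _ =>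
              (Finset.mul_sum _ _ _).symm
        _ = ∑ k ∈ Wfin, ∑ k' ∈ Wfin,
              (T k l * conj (T k' l)) * (if k = k' then 1 else 0) :=
            Finset.sum_congr rfl fun k hk => Finset.sum_congr rfl fun k' hk' => by
              rw [hcol k hk k' hk']
        _ = ∑ k ∈ Wfin, T k l * conj (T k l) := by
            refine Finset.sum_congr rfl fun k hk => ?_
            rw [Finset.sum_congr rfl (g := fun k' => if k = k' then T k l * conj (T k' l) else 0)
              (fun k' _ => by rw [mul_ite, mul_one, mul_zero]), Finset.sum_ite_eq, if_pos hk]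
    have hC : ((∑ j ∈ Jfin, ‖∑ k ∈ Wfin, T k l * B.c j k‖ ^ 2 : ℝ) : ℂ)
        = ((∑ k ∈ Wfin, ‖T k l‖ ^ 2 : ℝ) : ℂ) := by
      rw [Complex.ofReal_sum, Complex.ofReal_sum]
      calc ∑ j ∈ Jfin, ((‖∑ k ∈ Wfin, T k l * B.c j k‖ ^ 2 : ℝ) : ℂ)
          = ∑ j ∈ Jfin, ((∑ k ∈ Wfin, T k l * B.c j k)
              * conj (∑ k ∈ Wfin, T k l * B.c j k)) :=
            Finset.sum_congr rfl fun j _ => (mul_conj_self _).symm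
        _ = ∑ k ∈ Wfin, T k l * conj (T k l) := key
        _ = ∑ k ∈ Wfin, ((‖T k l‖ ^ 2 : ℝ) : ℂ) :=
            Finset.sum_congr rfl fun k _ => mul_conj_self _
    exact_mod_cast hC
  -- Step 4: reindex
  set NSet : Set (Fin d → ℤ) := {n | 1 ≤ znorm n ∧ znorm n ≤ 2 * lam} with hNdef
  have hNfinite : NSet.Finite := (finite_ball (2 * lam)).subset (fun n hn => hn.2)
  set Nfin : Finset (Fin d → ℤ) := hNfinite.toFinset with hNfin
  have hmemN : ∀ n, n ∈ Nfin ↔ (1 ≤ znorm n ∧ znorm n ≤ 2 * lam) := fun n =>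
    hNfinite.mem_toFinset
  set Mfin : (Fin d → ℤ) → Finset (Fin d → ℤ) :=
    fun n => Wfin.filter (fun k => znorm k = znorm (k + n)) with hM
  have hreidx : ∑ l ∈ Wfin, ∑ k ∈ Wfin, ‖T k l‖ ^ 2
      = ∑ n ∈ Nfin, ‖fcoef a n‖ ^ 2 * (Mfin n).card := by
    have h0 : ∑ l ∈ Wfin, ∑ k ∈ Wfin, ‖T k l‖ ^ 2
        = ∑ p ∈ Wfin ×ˢ Wfin, ‖T p.1 p.2‖ ^ 2 := by
      rw [Finset.sum_product, Finset.sum_comm]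
    have h1 : ∑ p ∈ Wfin ×ˢ Wfin, ‖T p.1 p.2‖ ^ 2
        = ∑ p ∈ (Wfin ×ˢ Wfin).filter (fun p => znorm p.1 = znorm p.2 ∧ p.1 ≠ p.2),
            ‖fcoef a (p.2 - p.1)‖ ^ 2 := by
      rw [Finset.sum_filter]
      refine Finset.sum_congr rfl fun p _ => ?_
      rw [hT]
      simp only
      split_ifs with h
      · rfl
      · simp
    have h2 : ∑ p ∈ (Wfin ×ˢ Wfin).filter (fun p => znorm p.1 = znorm p.2 ∧ p.1 ≠ p.2),
          ‖fcoef a (p.2 - p.1)‖ ^ 2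
        = ∑ q ∈ (Nfin ×ˢ Wfin).filter (fun q => znorm q.2 = znorm (q.2 + q.1)),
            ‖fcoef a q.1‖ ^ 2 := by
      refine Finset.sum_bij' (fun p _ => (p.2 - p.1, p.1)) (fun q _ => (q.2, q.2 + q.1))
        ?_ ?_ ?_ ?_ ?_
      · intro p hp
        rw [Finset.mem_filter, Finset.mem_product] at hp
        obtain ⟨⟨hp1, hp2⟩, hp3, hp4⟩ := hp
        rw [Finset.mem_filter, Finset.mem_product]
        refine ⟨⟨(hmemN _).2 ⟨?_, ?_⟩, hp1⟩, ?_⟩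
        · exact one_le_znorm (sub_ne_zero.2 (Ne.symm hp4))
        · have : p.2 - p.1 = p.2 + (-p.1) := sub_eq_add_neg _ _
          rw [this]
          have h5 := znorm_add_le p.2 (-p.1)
          rw [znorm_neg] at h5
          have h6 := ((hmemW p.1).1 hp1).2
          have h7 := ((hmemW p.2).1 hp2).2
          linarith
        · rw [add_sub_cancel]
          exact hp3
      · intro q hq
        rw [Finset.mem_filter, Finset.mem_product] at hq
        obtain ⟨⟨hq1, hq2⟩, hq3⟩ := hq
        rw [Finset.mem_filter, Finset.mem_product]
        refine ⟨⟨hq2, ?_⟩, ?_, ?_⟩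
        · rw [(hmemW _), ← hq3]
          exact (hmemW _).1 hq2
        · exact hq3
        · intro hcon
          have : q.1 = 0 := by
            have := congrArg (fun z => z - q.2) hcon
            simpa using this.symm
          have h8 := ((hmemN _).1 hq1).1
          rw [this, znorm_zero] at h8
          linarith
      · intro p hp
        simp [add_sub_cancel]
      · intro q hq
        simp [add_sub_cancel_left]
      · intro p hp
        simp [add_sub_cancel]
    have h3 : ∑ q ∈ (Nfin ×ˢ Wfin).filter (fun q => znorm q.2 = znorm (q.2 + q.1)),
          ‖fcoef a q.1‖ ^ 2
        = ∑ n ∈ Nfin, ‖fcoef a n‖ ^ 2 * (Mfin n).card := by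
      rw [Finset.sum_filter, Finset.sum_product]
      refine Finset.sum_congr rfl fun n hn => ?_
      rw [← Finset.sum_filter, hM]
      simp only
      rw [Finset.sum_const, nsmul_eq_mul, mul_comm]
    rw [h0, h1, h2, h3]
  -- Assemble
  have hLcnt : (Set.ncard J : ℝ) = (Jfin.card : ℝ) := by
    rw [Set.ncard_eq_toFinset_card J hJfinite]
  have hWcnt : (Set.ncard W : ℝ) = (Wfin.card : ℝ) := by
    rw [Set.ncard_eq_toFinset_card W hWfinite]
  have htsumL : (∑' j : ℕ, if clam ≤ B.Λ j ∧ B.Λ j ≤ lam then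
        ‖(∫ x, a x * ((‖B.ψ j x‖ ^ 2 : ℝ) : ℂ) ∂(haarT d)) - ∫ x, a x ∂(haarT d)‖ ^ 2 else 0)
      = ∑ j ∈ Jfin,
        ‖(∫ x, a x * ((‖B.ψ j x‖ ^ 2 : ℝ) : ℂ) ∂(haarT d)) - ∫ x, a x ∂(haarT d)‖ ^ 2 := by
    rw [tsum_eq_sum (s := Jfin) (fun j hj => if_neg (fun hcon => hj ((hmemJ j).2 hcon)))]
    exact Finset.sum_congr rfl fun j hj => if_pos ((hmemJ j).1 hj)
  have hstep1 : ∑ j ∈ Jfin,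
        ‖(∫ x, a x * ((‖B.ψ j x‖ ^ 2 : ℝ) : ℂ) ∂(haarT d)) - ∫ x, a x ∂(haarT d)‖ ^ 2
      ≤ ∑ n ∈ Nfin, ‖fcoef a n‖ ^ 2 * (Mfin n).card := by
    calc ∑ j ∈ Jfin,
          ‖(∫ x, a x * ((‖B.ψ j x‖ ^ 2 : ℝ) : ℂ) ∂(haarT d)) - ∫ x, a x ∂(haarT d)‖ ^ 2
        ≤ ∑ j ∈ Jfin, ∑ l ∈ Wfin, ‖∑ k ∈ Wfin, T k l * B.c j k‖ ^ 2 :=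
          Finset.sum_le_sum (fun j hj => by rw [hV j hj]; exact hCS j hj)
      _ = ∑ l ∈ Wfin, ∑ j ∈ Jfin, ‖∑ k ∈ Wfin, T k l * B.c j k‖ ^ 2 := Finset.sum_comm
      _ = ∑ l ∈ Wfin, ∑ k ∈ Wfin, ‖T k l‖ ^ 2 :=
          Finset.sum_congr rfl fun l _ => hsumj l
      _ = ∑ n ∈ Nfin, ‖fcoef a n‖ ^ 2 * (Mfin n).card := hreidx
  have hRHS : (∑' n : Fin d → ℤ,
        if 1 ≤ znorm n ∧ znorm n ≤ 2 * lam then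
          ‖fcoef a n‖ ^ 2 *
            ((Set.ncard {k : Fin d → ℤ |
                znorm k = znorm (k + n) ∧ clam ≤ znorm k ∧ znorm k ≤ lam} : ℝ) /
              (Set.ncard W : ℝ)) else 0)
      = ∑ n ∈ Nfin, ‖fcoef a n‖ ^ 2 * (((Mfin n).card : ℝ) / (Wfin.card : ℝ)) := by
    rw [tsum_eq_sum (s := Nfin) (fun n hn => if_neg (fun hcon => hn ((hmemN n).2 hcon)))]
    refine Finset.sum_congr rfl fun n hn => ?_
    rw [if_pos ((hmemN n).1 hn)]
    congr 1
    rw [hWcnt]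
    congr 2
    have hset : {k : Fin d → ℤ | znorm k = znorm (k + n) ∧ clam ≤ znorm k ∧ znorm k ≤ lam}
        = ↑(Mfin n) := by
      ext k
      rw [hM]
      simp only [Finset.coe_filter, Set.mem_setOf_eq, hmemW k]
      tauto
    rw [hset, Set.ncard_coe_finset]
  rw [htsumL, hRHS]
  have hJpos : (0:ℝ) < (Jfin.card : ℝ) := by exact_mod_cast hJcard_pos
  have hWpos : (0:ℝ) < (Wfin.card : ℝ) := by exact_mod_cast hWcard_pos
  rw [hLcnt]
  calc (1 / (Jfin.card : ℝ)) * ∑ j ∈ Jfin,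
        ‖(∫ x, a x * ((‖B.ψ j x‖ ^ 2 : ℝ) : ℂ) ∂(haarT d)) - ∫ x, a x ∂(haarT d)‖ ^ 2
      ≤ (1 / (Jfin.card : ℝ)) * ∑ n ∈ Nfin, ‖fcoef a n‖ ^ 2 * (Mfin n).card :=
        mul_le_mul_of_nonneg_left hstep1 (by positivity)
    _ ≤ (1 / (Wfin.card : ℝ)) * ∑ n ∈ Nfin, ‖fcoef a n‖ ^ 2 * (Mfin n).card := by
        refine mul_le_mul_of_nonneg_right
          (one_div_le_one_div_of_le hWpos (by exact_mod_cast hcardle)) ?_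
        exact Finset.sum_nonneg fun n _ => by positivity
    _ = ∑ n ∈ Nfin, ‖fcoef a n‖ ^ 2 * (((Mfin n).card : ℝ) / (Wfin.card : ℝ)) := by
        rw [Finset.mul_sum]
        exact Finset.sum_congr rfl fun n _ => by ring
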